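/- arXiv:1005.4508 — 2 statements merged into one kernel-verified Lean document; each statement's English description precedes it below -/
import Mathlib

section
/- The constraint reduction relation on deducibility constraint systems terminates: there is no infinite sequence C₁ ⤳ C₂ ⤳ C₃ ⤳ ⋯ of reductions, where the reduction rules are C1 (unify the right side of a right-constraint with a left-side member and apply the mgu, deleting the constraint), C2 (split a right-constraint with right side f(M,N), f a constructor, into two right-constraints with right sides M and N), C3 (replace a proper constraint with the corresponding right-constraint), C4 (replace a pair ⟨M,N⟩ on the left of a proper constraint by M and N), and C5 (replace an encryption {M}N on the left of a proper constraint by M and N, adding a new right-constraint Σ, {M}N ⊩_R? N). -/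
/-- Dolev-Yao messages with variables. -/
inductive MsgV : Type
  | name : ℕ → MsgV
  | var  : ℕ → MsgV
  | pair : MsgV → MsgV → MsgV
  | enc  : MsgV → MsgV → MsgV
  deriving DecidableEq

open MsgV

/-- Homomorphic extension of a substitution to messages. -/
def substT (θ : ℕ → MsgV) : MsgV → MsgV
  | name a => name a
  | var x => θ x
  | pair m n => pair (substT θ m) (substT θ n)
  | enc m k => enc (substT θ m) (substT θ k)

/-- Composition of substitutions: `comp θ ρ` applies θ first, then ρ. -/
def comp (θ ρ : ℕ → MsgV) : ℕ → MsgV := fun x => substT ρ (θ x)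

/-- Variables occurring in a message. -/
def varsT : MsgV → Finset ℕ
  | name _ => ∅
  | var x => {x}
  | pair m n => varsT m ∪ varsT n
  | enc m k => varsT m ∪ varsT k

/-- Variables occurring in a finite set of messages. -/
def varsS (S : Finset MsgV) : Finset ℕ := S.biUnion varsT

/-- Ground (variable-free) messages. -/
def groundT (m : MsgV) : Prop := varsT m = ∅

/-- Ground substitutions. -/
def groundSub (θ : ℕ → MsgV) : Prop := ∀ x, groundT (θ x)

/-- The Dolev-Yao sequent calculus (rules id, p_L, p_R, e_L, e_R). -/
inductive SC : Finset MsgV → MsgV → Prop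
  | id {Γ M} : M ∈ Γ → SC Γ M
  | pR {Γ M N} : SC Γ M → SC Γ N → SC Γ (pair M N)
  | eR {Γ M K} : SC Γ M → SC Γ K → SC Γ (enc M K)
  | pL {Γ M N T} : pair M N ∈ Γ →
      SC (insert M (insert N Γ)) T → SC Γ T
  | eL {Γ M K T} : enc M K ∈ Γ → SC Γ K →
      SC (insert M (insert K Γ)) T → SC Γ T

/-- Right-deducibility: derivability using only id, p_R, e_R. -/
inductive SCR : Finset MsgV → MsgV → Prop
  | id {Γ M} : M ∈ Γ → SCR Γ M
  | pR {Γ M N} : SCR Γ M → SCR Γ N → SCR Γ (pair M N)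
  | eR {Γ M K} : SCR Γ M → SCR Γ K → SCR Γ (enc M K)

/-- Deducibility constraints: proper (Σ ⊩? M) or right (Σ ⊩_R? M). -/
inductive Constraint : Type
  | proper : Finset MsgV → MsgV → Constraint
  | rightc : Finset MsgV → MsgV → Constraint
  deriving DecidableEq

/-- Left side of a constraint. -/
def Constraint.lhs : Constraint → Finset MsgV
  | .proper S _ => S
  | .rightc S _ => S

/-- Right side of a constraint. -/
def Constraint.rhs : Constraint → MsgV
  | .proper _ M => M
  | .rightc _ M => M

/-- Applying a substitution to a constraint. -/
def csub (θ : ℕ → MsgV) : Constraint → Constraint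
  | .proper S M => .proper (S.image (substT θ)) (substT θ M)
  | .rightc S M => .rightc (S.image (substT θ)) (substT θ M)

/-- A ground substitution satisfies a single constraint. -/
def holds (θ : ℕ → MsgV) : Constraint → Prop
  | .proper S M => SC (S.image (substT θ)) (substT θ M)
  | .rightc S M => SCR (S.image (substT θ)) (substT θ M)

/-- A solution of a list of constraints: a ground substitution satisfying
every constraint in the list. -/
def Solution (θ : ℕ → MsgV) (C : List Constraint) : Prop :=
  groundSub θ ∧ ∀ c ∈ C, holds θ c

/-- θ unifies M and N. -/
def Unifies (θ : ℕ → MsgV) (M N : MsgV) : Prop := substT θ M = substT θ N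

/-- θ is the most general unifier of M and N (variable-conservative, as is
standard: it only moves variables of M and N, within those variables). -/
def IsMGU (θ : ℕ → MsgV) (M N : MsgV) : Prop :=
  Unifies θ M N ∧
  (∀ σ, Unifies σ M N → ∃ ρ, ∀ x, σ x = substT ρ (θ x)) ∧
  (∀ x, θ x ≠ var x → x ∈ varsT M ∪ varsT N ∧ varsT (θ x) ⊆ varsT M ∪ varsT N)

/-- The identity substitution. -/
def idSub : ℕ → MsgV := fun x => var x

/-- One-step constraint reduction (rules C1–C5), labelled by the associated
substitution. -/
inductive Red : List Constraint → (ℕ → MsgV) → List Constraint → Prop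
  | c1 {C₁ C₂ : List Constraint} {S : Finset MsgV} {M N : MsgV} {θ : ℕ → MsgV} :
      (∀ x, M ≠ var x) → N ∈ S → IsMGU θ M N →
      Red (C₁ ++ Constraint.rightc S M :: C₂) θ
          (C₁.map (csub θ) ++ C₂.map (csub θ))
  | c2p {C₁ C₂ : List Constraint} {S : Finset MsgV} {M N : MsgV} :
      Red (C₁ ++ Constraint.rightc S (pair M N) :: C₂) idSub
          (C₁ ++ Constraint.rightc S M :: Constraint.rightc S N :: C₂)
  | c2e {C₁ C₂ : List Constraint} {S : Finset MsgV} {M N : MsgV} :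
      Red (C₁ ++ Constraint.rightc S (enc M N) :: C₂) idSub
          (C₁ ++ Constraint.rightc S M :: Constraint.rightc S N :: C₂)
  | c3 {C₁ C₂ : List Constraint} {S : Finset MsgV} {M : MsgV} :
      Red (C₁ ++ Constraint.proper S M :: C₂) idSub
          (C₁ ++ Constraint.rightc S M :: C₂)
  | c4 {C₁ C₂ : List Constraint} {S : Finset MsgV} {M N U : MsgV} :
      pair M N ∉ S →
      Red (C₁ ++ Constraint.proper (insert (pair M N) S) U :: C₂) idSub
          (C₁ ++ Constraint.proper (insert M (insert N S)) U :: C₂)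
  | c5 {C₁ C₂ : List Constraint} {S : Finset MsgV} {M N U : MsgV} :
      enc M N ∉ S →
      Red (C₁ ++ Constraint.proper (insert (enc M N) S) U :: C₂) idSub
          (C₁ ++ Constraint.rightc (insert (enc M N) S) N ::
                Constraint.proper (insert M (insert N S)) U :: C₂)

/-- Multi-step constraint reduction, accumulating the composed substitution. -/
inductive RedStar : List Constraint → (ℕ → MsgV) → List Constraint → Prop
  | refl (C) : RedStar C idSub C
  | step {C θ C' σ C''} : Red C θ C' → RedStar C' σ C'' →
      RedStar C (comp θ σ) C''

/-- Solved form: every constraint is Σ ⊩_R? x with x a variable. -/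
def Solved (C : List Constraint) : Prop :=
  ∀ c ∈ C, ∃ (S : Finset MsgV) (x : ℕ), c = Constraint.rightc S (var x)

/-- The i-th constraint of a list (with a default). -/
def nth (C : List Constraint) (i : ℕ) : Constraint :=
  C.getD i (Constraint.proper ∅ (name 0))

/-- Deducibility constraint systems (Definition 6.5 of the paper):
(1) for i < j and every solution θ of the prefix before position j, the
θ-instance of the part of the j-th left side whose variables all occur in the
i-th left side deduces the θ-instance of every member of the i-th left side;
(2) every variable first occurs on the right side of a constraint whose left
side does not contain it. -/
def DCSystem (C : List Constraint) : Prop :=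
  (∀ i j, i < j → j < C.length →
      ∀ θ, Solution θ (C.take j) →
        ∀ N ∈ (nth C i).lhs,
          SC ((((nth C j).lhs).filter
                (fun m => varsT m ⊆ varsS ((nth C i).lhs))).image (substT θ))
             (substT θ N)) ∧
  (∀ x, (∃ c ∈ C, x ∈ varsT c.rhs ∪ varsS c.lhs) →
      ∃ i, i < C.length ∧ x ∈ varsT ((nth C i).rhs) ∧
           x ∉ varsS ((nth C i).lhs) ∧
           ∀ j < i, x ∉ varsT ((nth C j).rhs) ∪ varsS ((nth C j).lhs))
/-! ### Auxiliary development for termination -/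

section Aux

/-- Term size. -/
def sizeT : MsgV → ℕ
  | name _ => 1
  | var _ => 1
  | pair m n => sizeT m + sizeT n + 1
  | enc m n => sizeT m + sizeT n + 1

lemma sizeT_pos (m : MsgV) : 0 < sizeT m := by cases m <;> simp [sizeT]

lemma substT_comp (θ ρ : ℕ → MsgV) (m : MsgV) :
    substT (comp θ ρ) m = substT ρ (substT θ m) := by
  induction m <;> simp [substT, comp, *]

lemma varsT_substT (θ : ℕ → MsgV) (m : MsgV) :
    varsT (substT θ m) = (varsT m).biUnion (fun v => varsT (θ v)) := by
  induction m with
  | name a => simp [substT, varsT]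
  | var x => simp [substT, varsT]
  | pair m n ihm ihn =>
      simp only [substT, varsT, ihm, ihn]
      ext a
      simp only [Finset.mem_union, Finset.mem_biUnion]
      constructor
      · rintro (⟨w, hw, ha⟩ | ⟨w, hw, ha⟩) <;> exact ⟨w, by tauto, ha⟩
      · rintro ⟨w, hw | hw, ha⟩
        · exact Or.inl ⟨w, hw, ha⟩
        · exact Or.inr ⟨w, hw, ha⟩
  | enc m n ihm ihn =>
      simp only [substT, varsT, ihm, ihn]
      ext a
      simp only [Finset.mem_union, Finset.mem_biUnion]
      constructor
      · rintro (⟨w, hw, ha⟩ | ⟨w, hw, ha⟩) <;> exact ⟨w, by tauto, ha⟩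
      · rintro ⟨w, hw | hw, ha⟩
        · exact Or.inl ⟨w, hw, ha⟩
        · exact Or.inr ⟨w, hw, ha⟩

lemma substT_congr {θ ρ : ℕ → MsgV} {m : MsgV}
    (h : ∀ v ∈ varsT m, θ v = ρ v) : substT θ m = substT ρ m := by
  induction m with
  | name a => simp [substT]
  | var x => simpa [substT, varsT] using h x (by simp [varsT])
  | pair m n ihm ihn =>
      simp only [substT]
      rw [ihm (fun v hv => h v (by simp [varsT, hv])),
          ihn (fun v hv => h v (by simp [varsT, hv]))]
  | enc m n ihm ihn =>
      simp only [substT]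
      rw [ihm (fun v hv => h v (by simp [varsT, hv])),
          ihn (fun v hv => h v (by simp [varsT, hv]))]

lemma substT_fix {θ : ℕ → MsgV} {m : MsgV}
    (h : ∀ v ∈ varsT m, θ v = var v) : substT θ m = m := by
  induction m with
  | name a => simp [substT]
  | var x => simpa [substT, varsT] using h x (by simp [varsT])
  | pair m n ihm ihn =>
      simp only [substT]
      rw [ihm (fun v hv => h v (by simp [varsT, hv])),
          ihn (fun v hv => h v (by simp [varsT, hv]))]
  | enc m n ihm ihn =>
      simp only [substT]
      rw [ihm (fun v hv => h v (by simp [varsT, hv])),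
          ihn (fun v hv => h v (by simp [varsT, hv]))]

lemma substT_idSub (m : MsgV) : substT idSub m = m := substT_fix (fun _ _ => rfl)

lemma sizeT_substT_var {θ : ℕ → MsgV} (h : ∀ v, ∃ w, θ v = var w) (m : MsgV) :
    sizeT (substT θ m) = sizeT m := by
  induction m with
  | name a => simp [substT]
  | var x => obtain ⟨w, hw⟩ := h x; simp [substT, hw, sizeT]
  | pair m n ihm ihn => simp [substT, sizeT, ihm, ihn]
  | enc m n ihm ihn => simp [substT, sizeT, ihm, ihn]

lemma sizeT_le_substT (σ : ℕ → MsgV) (m : MsgV) : sizeT m ≤ sizeT (substT σ m) := by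
  induction m with
  | name a => simp [substT]
  | var x => simp only [sizeT, substT]; exact sizeT_pos (σ x)
  | pair m n ihm ihn => simp [substT, sizeT]; omega
  | enc m n ihm ihn => simp [substT, sizeT]; omega

lemma sizeT_var_le {σ : ℕ → MsgV} {x : ℕ} {m : MsgV} (h : x ∈ varsT m) :
    sizeT (σ x) ≤ sizeT (substT σ m) := by
  induction m with
  | name a => simp [varsT] at h
  | var y => simp [varsT] at h; subst h; simp [substT]
  | pair m n ihm ihn =>
      simp [varsT] at h
      rcases h with h | h
      · exact le_trans (ihm h) (by simp [substT, sizeT]; omega)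
      · exact le_trans (ihn h) (by simp [substT, sizeT]; omega)
  | enc m n ihm ihn =>
      simp [varsT] at h
      rcases h with h | h
      · exact le_trans (ihm h) (by simp [substT, sizeT]; omega)
      · exact le_trans (ihn h) (by simp [substT, sizeT]; omega)

lemma occur_check {σ : ℕ → MsgV} {x : ℕ} {m : MsgV} (h : x ∈ varsT m)
    (hne : m ≠ var x) : sizeT (σ x) < sizeT (substT σ m) := by
  cases m with
  | name a => simp [varsT] at h
  | var y => simp [varsT] at h; subst h; exact absurd rfl hne
  | pair m n =>
      simp [varsT] at h
      rcases h with h | h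
      · exact lt_of_le_of_lt (sizeT_var_le h) (by simp [substT, sizeT])
      · exact lt_of_le_of_lt (sizeT_var_le h) (by simp [substT, sizeT])
  | enc m n =>
      simp [varsT] at h
      rcases h with h | h
      · exact lt_of_le_of_lt (sizeT_var_le h) (by simp [substT, sizeT])
      · exact lt_of_le_of_lt (sizeT_var_le h) (by simp [substT, sizeT])

lemma substT_ne_var {σ : ℕ → MsgV} {m : MsgV} (h : ∀ w, m ≠ var w) (w : ℕ) :
    substT σ m ≠ var w := by
  cases m with
  | name a => simp [substT]
  | var y => exact absurd rfl (h y)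
  | pair m n => simp [substT]
  | enc m n => simp [substT]

end Aux
section IMGU

/-- Single-point substitution. -/
def one (x : ℕ) (t : MsgV) : ℕ → MsgV := fun y => if y = x then t else var y

/-- Idempotent mgu (what the unification algorithm produces). -/
def IsIMGU (η : ℕ → MsgV) (M N : MsgV) : Prop :=
  Unifies η M N ∧
  (∀ σ, Unifies σ M N → ∃ ρ, ∀ x, σ x = substT ρ (η x)) ∧
  (∀ x, η x ≠ var x → x ∈ varsT M ∪ varsT N ∧ varsT (η x) ⊆ varsT M ∪ varsT N) ∧
  (∀ x y, y ∈ varsT (η x) → η y = var y)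

lemma substT_factor {σ ρ η : ℕ → MsgV} (h : ∀ x, σ x = substT ρ (η x)) (t : MsgV) :
    substT σ t = substT ρ (substT η t) := by
  rw [← substT_comp]
  exact substT_congr (fun v _ => h v)

lemma imgu_refl (M : MsgV) : IsIMGU idSub M M := by
  refine ⟨rfl, fun σ _ => ⟨σ, fun x => rfl⟩, fun x hx => absurd rfl hx, ?_⟩
  intro x y hy
  simp [idSub, varsT] at hy
  simp [idSub, hy]

lemma imgu_symm {η : ℕ → MsgV} {M N : MsgV} (h : IsIMGU η M N) : IsIMGU η N M := by
  obtain ⟨u, g, v, i⟩ := h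
  exact ⟨u.symm, fun σ hσ => g σ hσ.symm,
    by rw [Finset.union_comm]; exact v, i⟩

lemma one_isIMGU {x : ℕ} {N : MsgV} (hx : x ∉ varsT N) : IsIMGU (one x N) (var x) N := by
  have hfix : ∀ t : MsgV, (∀ v ∈ varsT t, v ≠ x) → substT (one x N) t = t := by
    intro t ht
    exact substT_fix (fun v hv => by simp [one, ht v hv])
  have hN : substT (one x N) N = N := hfix N (fun v hv => by rintro rfl; exact hx hv)
  refine ⟨?_, ?_, ?_, ?_⟩
  · show substT (one x N) (var x) = substT (one x N) N
    rw [hN]; simp [substT, one]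
  · intro σ hσ
    have hσx : σ x = substT σ N := hσ
    refine ⟨σ, fun y => ?_⟩
    by_cases hy : y = x
    · subst hy; simp [one, substT, hσx]
    · simp [one, hy, substT]
  · intro y hy
    have hone : one y N y = N → True := fun _ => trivial
    by_cases hyx : y = x
    · subst hyx
      have honex : one y N y = N := if_pos rfl
      constructor
      · simp [varsT]
      · intro z hz
        rw [honex] at hz
        simp [varsT, Finset.mem_union, hz]
    · exact absurd (if_neg hyx) hy
  · intro x' y hy
    by_cases hx' : x' = x
    · subst hx'
      have honex : one x' N x' = N := if_pos rfl
      rw [honex] at hy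
      have hyne : y ≠ x' := by rintro rfl; exact hx hy
      exact if_neg hyne
    · rw [show one x N x' = var x' from if_neg hx'] at hy
      simp only [varsT, Finset.mem_singleton] at hy
      subst hy
      exact if_neg hx'

lemma comp_apply (η1 η2 : ℕ → MsgV) (x : ℕ) : comp η1 η2 x = substT η2 (η1 x) := rfl

lemma varsT_substT_sub {η : ℕ → MsgV} {V : Finset ℕ}
    (hη : ∀ v, η v ≠ var v → varsT (η v) ⊆ V) (t : MsgV) :
    varsT (substT η t) ⊆ V ∪ varsT t := by
  intro z hz
  rw [varsT_substT] at hz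
  obtain ⟨v, hv, hz⟩ := Finset.mem_biUnion.1 hz
  by_cases h : η v = var v
  · rw [h] at hz
    simp only [varsT, Finset.mem_singleton] at hz
    subst hz
    exact Finset.mem_union_right _ hv
  · exact Finset.mem_union_left _ (hη v h hz)

lemma comp_core {η1 η2 : ℕ → MsgV} {a b c d : MsgV}
    (h1 : IsIMGU η1 a c) (h2 : IsIMGU η2 (substT η1 b) (substT η1 d)) :
    Unifies (comp η1 η2) a c ∧ Unifies (comp η1 η2) b d ∧
    (∀ σ, Unifies σ a c → Unifies σ b d →
        ∃ ρ, ∀ x, σ x = substT ρ (comp η1 η2 x)) ∧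
    (∀ x, comp η1 η2 x ≠ var x →
        x ∈ (varsT a ∪ varsT b) ∪ (varsT c ∪ varsT d) ∧
        varsT (comp η1 η2 x) ⊆ (varsT a ∪ varsT b) ∪ (varsT c ∪ varsT d)) ∧
    (∀ x y, y ∈ varsT (comp η1 η2 x) → comp η1 η2 y = var y) := by
  obtain ⟨u1, g1, v1, i1⟩ := h1
  obtain ⟨u2, g2, v2, i2⟩ := h2
  set V1 := varsT a ∪ varsT c with hV1
  set V2 := varsT (substT η1 b) ∪ varsT (substT η1 d) with hV2
  set Big := (varsT a ∪ varsT b) ∪ (varsT c ∪ varsT d) with hBig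
  have hV1Big : V1 ⊆ Big := by
    intro z hz; rw [hV1] at hz; rw [hBig]
    rcases Finset.mem_union.1 hz with h | h
    · exact Finset.mem_union_left _ (Finset.mem_union_left _ h)
    · exact Finset.mem_union_right _ (Finset.mem_union_left _ h)
  have hsub1 : ∀ v, η1 v ≠ var v → varsT (η1 v) ⊆ V1 := fun v hv => (v1 v hv).2
  have hV2Big : V2 ⊆ Big := by
    intro z hz; rw [hV2] at hz
    rcases Finset.mem_union.1 hz with h | h
    · rcases Finset.mem_union.1 (varsT_substT_sub hsub1 b h) with h' | h'
      · exact hV1Big h'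
      · exact Finset.mem_union_left _ (Finset.mem_union_right _ h')
    · rcases Finset.mem_union.1 (varsT_substT_sub hsub1 d h) with h' | h'
      · exact hV1Big h'
      · exact Finset.mem_union_right _ (Finset.mem_union_right _ h')
  have hF3 : ∀ z, z ∈ V2 → η1 z = var z := by
    intro z hz
    rw [hV2] at hz
    rcases Finset.mem_union.1 hz with h | h <;>
    · rw [varsT_substT] at h
      obtain ⟨v, _, hzv⟩ := Finset.mem_biUnion.1 h
      exact i1 v z hzv
  refine ⟨?_, ?_, ?_, ?_, ?_⟩
  · show substT (comp η1 η2) a = substT (comp η1 η2) c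
    rw [substT_comp, substT_comp, u1]
  · show substT (comp η1 η2) b = substT (comp η1 η2) d
    rw [substT_comp, substT_comp]; exact u2
  · intro σ hac hbd
    obtain ⟨ρ1, hρ1⟩ := g1 σ hac
    have hρ1u : Unifies ρ1 (substT η1 b) (substT η1 d) := by
      show substT ρ1 (substT η1 b) = substT ρ1 (substT η1 d)
      rw [← substT_factor hρ1, ← substT_factor hρ1]; exact hbd
    obtain ⟨ρ2, hρ2⟩ := g2 ρ1 hρ1u
    refine ⟨ρ2, fun x => ?_⟩
    rw [hρ1 x, comp_apply, substT_factor hρ2]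
  · intro x hx
    rw [comp_apply] at hx ⊢
    by_cases hη1 : η1 x = var x
    · rw [hη1] at hx ⊢
      have hη2 : η2 x ≠ var x := hx
      exact ⟨hV2Big (v2 x hη2).1, fun z hz => hV2Big ((v2 x hη2).2 hz)⟩
    · refine ⟨hV1Big (v1 x hη1).1, ?_⟩
      intro z hz
      rw [varsT_substT] at hz
      obtain ⟨v, hv, hzv⟩ := Finset.mem_biUnion.1 hz
      by_cases hη2 : η2 v = var v
      · rw [hη2] at hzv
        simp only [varsT, Finset.mem_singleton] at hzv
        subst hzv
        exact hV1Big ((v1 x hη1).2 hv)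
      · exact hV2Big ((v2 v hη2).2 hzv)
  · intro x y hy
    rw [comp_apply] at hy
    rw [varsT_substT] at hy
    obtain ⟨v, hv, hyv⟩ := Finset.mem_biUnion.1 hy
    have hη2y : η2 y = var y := i2 v y hyv
    have hη1y : η1 y = var y := by
      by_cases hη2 : η2 v = var v
      · rw [hη2] at hyv
        simp only [varsT, Finset.mem_singleton] at hyv
        subst hyv
        exact i1 x y hv
      · exact hF3 y ((v2 v hη2).2 hyv)
    rw [comp_apply, hη1y]
    show substT η2 (var y) = var y
    simpa [substT] using hη2y

lemma imgu_pair {η1 η2 : ℕ → MsgV} {a b c d : MsgV}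
    (h1 : IsIMGU η1 a c) (h2 : IsIMGU η2 (substT η1 b) (substT η1 d)) :
    IsIMGU (comp η1 η2) (pair a b) (pair c d) := by
  obtain ⟨e1, e2, g, v, i⟩ := comp_core h1 h2
  refine ⟨?_, ?_, ?_, i⟩
  · show substT _ (pair a b) = substT _ (pair c d)
    simp only [substT]
    rw [e1, e2]
  · intro σ hσ
    have hσ' : pair (substT σ a) (substT σ b) = pair (substT σ c) (substT σ d) := hσ
    rw [MsgV.pair.injEq] at hσ'
    exact g σ hσ'.1 hσ'.2
  · intro x hx
    have := v x hx
    simpa [varsT] using this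

lemma imgu_enc {η1 η2 : ℕ → MsgV} {a b c d : MsgV}
    (h1 : IsIMGU η1 a c) (h2 : IsIMGU η2 (substT η1 b) (substT η1 d)) :
    IsIMGU (comp η1 η2) (enc a b) (enc c d) := by
  obtain ⟨e1, e2, g, v, i⟩ := comp_core h1 h2
  refine ⟨?_, ?_, ?_, i⟩
  · show substT _ (enc a b) = substT _ (enc c d)
    simp only [substT]
    rw [e1, e2]
  · intro σ hσ
    have hσ' : enc (substT σ a) (substT σ b) = enc (substT σ c) (substT σ d) := hσ
    rw [MsgV.enc.injEq] at hσ'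
    exact g σ hσ'.1 hσ'.2
  · intro x hx
    have := v x hx
    simpa [varsT] using this

end IMGU
section Exists

lemma unify_var_cases {x : ℕ} {N : MsgV} (hσ : ∃ σ, Unifies σ (var x) N) :
    N = var x ∨ x ∉ varsT N := by
  by_cases h : N = var x
  · exact Or.inl h
  · right
    intro hx
    obtain ⟨σ, hσ⟩ := hσ
    have h1 : σ x = substT σ N := hσ
    have h2 := occur_check (σ := σ) hx h
    rw [← h1] at h2
    exact lt_irrefl _ h2

theorem exists_imgu_aux : ∀ k s (M N : MsgV),
    (varsT M ∪ varsT N).card < k → sizeT M + sizeT N < s →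
    (∃ σ, Unifies σ M N) → ∃ η, IsIMGU η M N := by
  intro k
  induction k with
  | zero => intro s M N hk; exact absurd hk (Nat.not_lt_zero _)
  | succ k ihk =>
    intro s
    induction s with
    | zero => intro M N _ hs; exact absurd hs (Nat.not_lt_zero _)
    | succ s ihs =>
      intro M N hk hs hex
      -- dispatch variable cases first
      match M, N with
      | var x, N =>
        rcases unify_var_cases hex with h | h
        · subst h; exact ⟨idSub, imgu_refl _⟩
        · exact ⟨one x N, one_isIMGU h⟩
      | name a, var x =>
        rcases unify_var_cases (hex.imp (fun σ hσ => hσ.symm)) with h | h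
        · rw [h]; exact ⟨idSub, imgu_refl _⟩
        · exact ⟨one x (name a), imgu_symm (one_isIMGU h)⟩
      | pair a b, var x =>
        rcases unify_var_cases (hex.imp (fun σ hσ => hσ.symm)) with h | h
        · rw [h]; exact ⟨idSub, imgu_refl _⟩
        · exact ⟨one x (pair a b), imgu_symm (one_isIMGU h)⟩
      | enc a b, var x =>
        rcases unify_var_cases (hex.imp (fun σ hσ => hσ.symm)) with h | h
        · rw [h]; exact ⟨idSub, imgu_refl _⟩
        · exact ⟨one x (enc a b), imgu_symm (one_isIMGU h)⟩
      | name a, name b =>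
        obtain ⟨σ, hσ⟩ := hex
        have : name a = name b := hσ
        rw [MsgV.name.injEq] at this
        subst this
        exact ⟨idSub, imgu_refl _⟩
      | name a, pair c d => obtain ⟨σ, hσ⟩ := hex; exact absurd hσ (by simp [Unifies, substT])
      | name a, enc c d => obtain ⟨σ, hσ⟩ := hex; exact absurd hσ (by simp [Unifies, substT])
      | pair a b, name c => obtain ⟨σ, hσ⟩ := hex; exact absurd hσ (by simp [Unifies, substT])
      | enc a b, name c => obtain ⟨σ, hσ⟩ := hex; exact absurd hσ (by simp [Unifies, substT])
      | pair a b, enc c d => obtain ⟨σ, hσ⟩ := hex; exact absurd hσ (by simp [Unifies, substT])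
      | enc a b, pair c d => obtain ⟨σ, hσ⟩ := hex; exact absurd hσ (by simp [Unifies, substT])
      | pair a b, pair c d =>
        obtain ⟨σ, hσ⟩ := hex
        have hσ' : pair (substT σ a) (substT σ b) = pair (substT σ c) (substT σ d) := hσ
        rw [MsgV.pair.injEq] at hσ'
        have hsub : varsT a ∪ varsT c ⊆ varsT (pair a b) ∪ varsT (pair c d) := by
          intro z hz
          simp only [varsT, Finset.mem_union] at hz ⊢
          tauto
        have h1 : ∃ η1, IsIMGU η1 a c := by
          apply ihs a c (lt_of_le_of_lt (Finset.card_le_card hsub) hk)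
          · have := sizeT_pos b; have := sizeT_pos d
            simp only [sizeT] at hs; omega
          · exact ⟨σ, hσ'.1⟩
        obtain ⟨η1, hη1⟩ := h1
        have hexbd : ∃ τ, Unifies τ (substT η1 b) (substT η1 d) := by
          obtain ⟨ρ1, hρ1⟩ := hη1.2.1 σ hσ'.1
          refine ⟨ρ1, ?_⟩
          show substT ρ1 (substT η1 b) = substT ρ1 (substT η1 d)
          rw [← substT_factor hρ1, ← substT_factor hρ1]
          exact hσ'.2
        by_cases hB : ∃ x1, η1 x1 ≠ var x1
        · obtain ⟨x1, hx1⟩ := hB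
          have hx1V : x1 ∈ varsT a ∪ varsT c := (hη1.2.2.1 x1 hx1).1
          have hx1M : x1 ∈ varsT (pair a b) ∪ varsT (pair c d) := hsub hx1V
          have hcard : (varsT (substT η1 b) ∪ varsT (substT η1 d)).card < k := by
            have hss : varsT (substT η1 b) ∪ varsT (substT η1 d) ⊆
                (varsT (pair a b) ∪ varsT (pair c d)).erase x1 := by
              intro z hz
              have hzmem : z ∈ varsT (pair a b) ∪ varsT (pair c d) ∧ z ≠ x1 := by
                rcases Finset.mem_union.1 hz with h | h
                all_goals {
                  rw [varsT_substT] at h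
                  obtain ⟨v, hv, hzv⟩ := Finset.mem_biUnion.1 h
                  have hzx1 : z ≠ x1 := by
                    rintro rfl
                    exact hx1 (hη1.2.2.2 v z hzv)
                  refine ⟨?_, hzx1⟩
                  by_cases hηv : η1 v = var v
                  · rw [hηv] at hzv
                    simp only [varsT, Finset.mem_singleton] at hzv
                    subst hzv
                    simp only [varsT, Finset.mem_union] at hv ⊢
                    tauto
                  · exact hsub ((hη1.2.2.1 v hηv).2 hzv) }
              exact Finset.mem_erase.2 ⟨hzmem.2, hzmem.1⟩
            calc (varsT (substT η1 b) ∪ varsT (substT η1 d)).card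
                ≤ ((varsT (pair a b) ∪ varsT (pair c d)).erase x1).card :=
                  Finset.card_le_card hss
              _ < (varsT (pair a b) ∪ varsT (pair c d)).card :=
                  Finset.card_erase_lt_of_mem hx1M
              _ ≤ k := Nat.lt_succ_iff.1 hk
          obtain ⟨η2, hη2⟩ := ihk (sizeT (substT η1 b) + sizeT (substT η1 d) + 1)
            (substT η1 b) (substT η1 d) (by omega) (by omega) hexbd
          exact ⟨comp η1 η2, imgu_pair hη1 hη2⟩
        · push_neg at hB
          have hfb : substT η1 b = b := substT_fix (fun v _ => hB v)
          have hfd : substT η1 d = d := substT_fix (fun v _ => hB v)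
          have h2 : ∃ η2, IsIMGU η2 (substT η1 b) (substT η1 d) := by
            rw [hfb, hfd]
            apply ihs b d
            · apply lt_of_le_of_lt (Finset.card_le_card _) hk
              intro z hz
              simp only [varsT, Finset.mem_union] at hz ⊢
              tauto
            · have := sizeT_pos a; have := sizeT_pos c
              simp only [sizeT] at hs; omega
            · exact ⟨σ, hσ'.2⟩
          obtain ⟨η2, hη2⟩ := h2
          exact ⟨comp η1 η2, imgu_pair hη1 hη2⟩
      | enc a b, enc c d =>
        obtain ⟨σ, hσ⟩ := hex
        have hσ' : enc (substT σ a) (substT σ b) = enc (substT σ c) (substT σ d) := hσ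
        rw [MsgV.enc.injEq] at hσ'
        have hsub : varsT a ∪ varsT c ⊆ varsT (enc a b) ∪ varsT (enc c d) := by
          intro z hz
          simp only [varsT, Finset.mem_union] at hz ⊢
          tauto
        have h1 : ∃ η1, IsIMGU η1 a c := by
          apply ihs a c (lt_of_le_of_lt (Finset.card_le_card hsub) hk)
          · have := sizeT_pos b; have := sizeT_pos d
            simp only [sizeT] at hs; omega
          · exact ⟨σ, hσ'.1⟩
        obtain ⟨η1, hη1⟩ := h1
        have hexbd : ∃ τ, Unifies τ (substT η1 b) (substT η1 d) := by
          obtain ⟨ρ1, hρ1⟩ := hη1.2.1 σ hσ'.1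
          refine ⟨ρ1, ?_⟩
          show substT ρ1 (substT η1 b) = substT ρ1 (substT η1 d)
          rw [← substT_factor hρ1, ← substT_factor hρ1]
          exact hσ'.2
        by_cases hB : ∃ x1, η1 x1 ≠ var x1
        · obtain ⟨x1, hx1⟩ := hB
          have hx1V : x1 ∈ varsT a ∪ varsT c := (hη1.2.2.1 x1 hx1).1
          have hx1M : x1 ∈ varsT (enc a b) ∪ varsT (enc c d) := hsub hx1V
          have hcard : (varsT (substT η1 b) ∪ varsT (substT η1 d)).card < k := by
            have hss : varsT (substT η1 b) ∪ varsT (substT η1 d) ⊆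
                (varsT (enc a b) ∪ varsT (enc c d)).erase x1 := by
              intro z hz
              have hzmem : z ∈ varsT (enc a b) ∪ varsT (enc c d) ∧ z ≠ x1 := by
                rcases Finset.mem_union.1 hz with h | h
                all_goals {
                  rw [varsT_substT] at h
                  obtain ⟨v, hv, hzv⟩ := Finset.mem_biUnion.1 h
                  have hzx1 : z ≠ x1 := by
                    rintro rfl
                    exact hx1 (hη1.2.2.2 v z hzv)
                  refine ⟨?_, hzx1⟩
                  by_cases hηv : η1 v = var v
                  · rw [hηv] at hzv
                    simp only [varsT, Finset.mem_singleton] at hzv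
                    subst hzv
                    simp only [varsT, Finset.mem_union] at hv ⊢
                    tauto
                  · exact hsub ((hη1.2.2.1 v hηv).2 hzv) }
              exact Finset.mem_erase.2 ⟨hzmem.2, hzmem.1⟩
            calc (varsT (substT η1 b) ∪ varsT (substT η1 d)).card
                ≤ ((varsT (enc a b) ∪ varsT (enc c d)).erase x1).card :=
                  Finset.card_le_card hss
              _ < (varsT (enc a b) ∪ varsT (enc c d)).card :=
                  Finset.card_erase_lt_of_mem hx1M
              _ ≤ k := Nat.lt_succ_iff.1 hk
          obtain ⟨η2, hη2⟩ := ihk (sizeT (substT η1 b) + sizeT (substT η1 d) + 1)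
            (substT η1 b) (substT η1 d) (by omega) (by omega) hexbd
          exact ⟨comp η1 η2, imgu_enc hη1 hη2⟩
        · push_neg at hB
          have hfb : substT η1 b = b := substT_fix (fun v _ => hB v)
          have hfd : substT η1 d = d := substT_fix (fun v _ => hB v)
          have h2 : ∃ η2, IsIMGU η2 (substT η1 b) (substT η1 d) := by
            rw [hfb, hfd]
            apply ihs b d
            · apply lt_of_le_of_lt (Finset.card_le_card _) hk
              intro z hz
              simp only [varsT, Finset.mem_union] at hz ⊢
              tauto
            · have := sizeT_pos a; have := sizeT_pos c
              simp only [sizeT] at hs; omega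
            · exact ⟨σ, hσ'.2⟩
          obtain ⟨η2, hη2⟩ := h2
          exact ⟨comp η1 η2, imgu_enc hη1 hη2⟩

theorem exists_imgu (M N : MsgV) (hex : ∃ σ, Unifies σ M N) : ∃ η, IsIMGU η M N :=
  exists_imgu_aux ((varsT M ∪ varsT N).card + 1) (sizeT M + sizeT N + 1) M N
    (Nat.lt_succ_self _) (Nat.lt_succ_self _) hex

end Exists
section Vanish

lemma eq_var_of_substT {ρ : ℕ → MsgV} {t : MsgV} {v : ℕ}
    (h : substT ρ t = var v) : ∃ w, t = var w := by
  cases t with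
  | var w => exact ⟨w, rfl⟩
  | name a => simp [substT] at h
  | pair m n => simp [substT] at h
  | enc m n => simp [substT] at h

lemma vanish {θ : ℕ → MsgV} {M N : MsgV} (hθ : IsMGU θ M N) {x0 : ℕ}
    (hx0 : ∀ w, θ x0 ≠ var w) :
    ∃ z ∈ varsT M ∪ varsT N, ∀ y, z ∉ varsT (θ y) := by
  classical
  obtain ⟨η, hη⟩ := exists_imgu M N ⟨θ, hθ.1⟩
  obtain ⟨ρ, hρ⟩ := hη.2.1 θ hθ.1
  obtain ⟨ρ', hρ'⟩ := hθ.2.1 η hη.1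
  set V := varsT M ∪ varsT N with hV
  have hηx0 : ∀ w, η x0 ≠ var w := by
    intro w hw
    have h := hρ' x0
    rw [hw] at h
    exact substT_ne_var hx0 w h.symm
  have hx0V : x0 ∈ V := (hθ.2.2 x0 (hx0 x0)).1
  set A := V.biUnion (fun y => varsT (η y)) with hA
  have hAvar : ∀ v ∈ A, η v = var v := by
    intro v hv
    obtain ⟨y, _, hv⟩ := Finset.mem_biUnion.1 hv
    exact hη.2.2.2 y v hv
  have hAV : A ⊆ V := by
    intro z hz
    obtain ⟨y, hy, hz⟩ := Finset.mem_biUnion.1 hz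
    by_cases h : η y = var y
    · rw [h] at hz
      simp only [varsT, Finset.mem_singleton] at hz
      subst hz; exact hy
    · exact (hη.2.2.1 y h).2 hz
  have hx0A : x0 ∉ A := fun h => hηx0 x0 (hAvar x0 h)
  have hAerase : A ⊆ V.erase x0 :=
    fun z hz => Finset.mem_erase.2 ⟨fun h => hx0A (h ▸ hz), hAV hz⟩
  have hcardA : A.card < V.card :=
    lt_of_le_of_lt (Finset.card_le_card hAerase) (Finset.card_erase_lt_of_mem hx0V)
  -- each v ∈ A is sent by ρ to a variable r v, injectively
  have hρA : ∀ v ∈ A, ∃ w, ρ v = var w := by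
    intro v hv
    have hηv := hAvar v hv
    have hθv : θ v = ρ v := by
      have := hρ v
      rw [hηv] at this
      exact this
    have h2 : substT ρ' (ρ v) = var v := by
      have := hρ' v
      rw [hηv, hθv] at this
      exact this.symm
    exact eq_var_of_substT h2
  set r : ℕ → ℕ := fun v => if h : ∃ w, ρ v = var w then h.choose else 0 with hr
  have hrv : ∀ v ∈ A, ρ v = var (r v) := by
    intro v hv
    have h := hρA v hv
    simp only [hr, dif_pos h]
    exact h.choose_spec
  set U := V.biUnion (fun y => varsT (θ y)) with hU
  have hUsub : U ⊆ A.image r := by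
    intro z hz
    obtain ⟨y, hy, hz⟩ := Finset.mem_biUnion.1 hz
    rw [hρ y, varsT_substT] at hz
    obtain ⟨v, hv, hz⟩ := Finset.mem_biUnion.1 hz
    have hvA : v ∈ A := Finset.mem_biUnion.2 ⟨y, hy, hv⟩
    rw [hrv v hvA] at hz
    simp only [varsT, Finset.mem_singleton] at hz
    subst hz
    exact Finset.mem_image_of_mem r hvA
  have hcardU : U.card < V.card :=
    lt_of_le_of_lt (le_trans (Finset.card_le_card hUsub) Finset.card_image_le) hcardA
  have hzex : ∃ z ∈ V, z ∉ U := by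
    by_contra h
    push_neg at h
    exact absurd (Finset.card_le_card h) (not_le.2 hcardU)
  obtain ⟨z, hzV, hzU⟩ := hzex
  refine ⟨z, hzV, fun y hzy => ?_⟩
  by_cases hy : y ∈ V
  · exact hzU (Finset.mem_biUnion.2 ⟨y, hy, hzy⟩)
  · have hθy : θ y = var y := by
      by_contra h
      exact hy (hθ.2.2 y h).1
    rw [hθy] at hzy
    simp only [varsT, Finset.mem_singleton] at hzy
    subst hzy
    exact hy hzV

end Vanish
section Measure

/-- Variables of a constraint. -/
def cvars (c : Constraint) : Finset ℕ := varsS c.lhs ∪ varsT c.rhs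

/-- Variables of a list of constraints. -/
def varsC : List Constraint → Finset ℕ
  | [] => ∅
  | c :: t => cvars c ∪ varsC t

lemma varsC_append (L1 L2 : List Constraint) :
    varsC (L1 ++ L2) = varsC L1 ∪ varsC L2 := by
  induction L1 with
  | nil => simp [varsC]
  | cons c t ih => simp [varsC, ih, Finset.union_assoc]

lemma varsS_insert (m : MsgV) (S : Finset MsgV) :
    varsS (insert m S) = varsT m ∪ varsS S := Finset.biUnion_insert

/-- Second measure component of a single constraint. -/
def mu2 : Constraint → ℕ
  | .proper S _ => 1 + S.sum sizeT
  | .rightc _ _ => 0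

/-- Third measure component of a single constraint. -/
def mu3 : Constraint → ℕ
  | .proper _ _ => 0
  | .rightc _ M => sizeT M

def mu1L (C : List Constraint) : ℕ := (varsC C).card
def mu2L (C : List Constraint) : ℕ := (C.map mu2).sum
def mu3L (C : List Constraint) : ℕ := (C.map mu3).sum

/-- Lexicographic decrease of the measure. -/
def RedLt (C' C : List Constraint) : Prop :=
  mu1L C' < mu1L C ∨ (mu1L C' = mu1L C ∧
    (mu2L C' < mu2L C ∨ (mu2L C' = mu2L C ∧ mu3L C' < mu3L C)))

lemma sum_insert_le (a : MsgV) (s : Finset MsgV) :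
    (insert a s).sum sizeT ≤ sizeT a + s.sum sizeT := by
  by_cases h : a ∈ s
  · rw [Finset.insert_eq_self.2 h]; omega
  · rw [Finset.sum_insert h]

lemma sum_image_le (s : Finset MsgV) (f : MsgV → MsgV) :
    (s.image f).sum sizeT ≤ s.sum (fun m => sizeT (f m)) := by
  classical
  induction s using Finset.induction_on with
  | empty => simp
  | insert _ _ h ih =>
      rw [Finset.image_insert, Finset.sum_insert h]
      exact le_trans (sum_insert_le _ _) (by omega)

lemma cvars_csub (θ : ℕ → MsgV) (c : Constraint) :
    cvars (csub θ c) ⊆ (cvars c).biUnion (fun w => varsT (θ w)) := by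
  cases c with
  | proper S M =>
      intro z hz
      simp only [cvars, csub, Constraint.lhs, Constraint.rhs, varsS,
        Finset.mem_union, Finset.mem_biUnion, Finset.mem_image, varsT_substT] at hz ⊢
      rcases hz with ⟨m', ⟨m, hm, rfl⟩, hzm⟩ | hz
      · rw [varsT_substT] at hzm
        obtain ⟨w, hw, hz⟩ := Finset.mem_biUnion.1 hzm
        exact ⟨w, Or.inl ⟨m, hm, hw⟩, hz⟩
      · obtain ⟨w, hw, hz⟩ := hz
        exact ⟨w, Or.inr hw, hz⟩
  | rightc S M =>
      intro z hz
      simp only [cvars, csub, Constraint.lhs, Constraint.rhs, varsS,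
        Finset.mem_union, Finset.mem_biUnion, Finset.mem_image, varsT_substT] at hz ⊢
      rcases hz with ⟨m', ⟨m, hm, rfl⟩, hzm⟩ | hz
      · rw [varsT_substT] at hzm
        obtain ⟨w, hw, hz⟩ := Finset.mem_biUnion.1 hzm
        exact ⟨w, Or.inl ⟨m, hm, hw⟩, hz⟩
      · obtain ⟨w, hw, hz⟩ := hz
        exact ⟨w, Or.inr hw, hz⟩

lemma varsC_map_csub (θ : ℕ → MsgV) (L : List Constraint) :
    varsC (L.map (csub θ)) ⊆ (varsC L).biUnion (fun w => varsT (θ w)) := by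
  induction L with
  | nil => simp [varsC]
  | cons c t ih =>
      simp only [List.map_cons, varsC]
      apply Finset.union_subset
      · refine (cvars_csub θ c).trans ?_
        apply Finset.biUnion_subset_biUnion_of_subset_left
        exact Finset.subset_union_left
      · refine ih.trans ?_
        apply Finset.biUnion_subset_biUnion_of_subset_left
        exact Finset.subset_union_right

lemma mu2_csub_le {θ : ℕ → MsgV} (hθ : ∀ w, ∃ u, θ w = var u) (c : Constraint) :
    mu2 (csub θ c) ≤ mu2 c := by
  cases c with
  | proper S M =>
      simp only [csub, mu2]
      have h1 : (S.image (substT θ)).sum sizeT ≤ S.sum (fun m => sizeT (substT θ m)) :=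
        sum_image_le S (substT θ)
      have h2 : S.sum (fun m => sizeT (substT θ m)) = S.sum sizeT :=
        Finset.sum_congr rfl (fun m _ => sizeT_substT_var hθ m)
      omega
  | rightc S M => simp [csub, mu2]

lemma mu3_csub_eq {θ : ℕ → MsgV} (hθ : ∀ w, ∃ u, θ w = var u) (c : Constraint) :
    mu3 (csub θ c) = mu3 c := by
  cases c with
  | proper S M => simp [csub, mu3]
  | rightc S M => simp [csub, mu3, sizeT_substT_var hθ]

end Measure
section Main

lemma redlt_of_le_le_lt {C' C : List Constraint} (h1 : mu1L C' ≤ mu1L C)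
    (h2 : mu2L C' ≤ mu2L C) (h3 : mu3L C' < mu3L C) : RedLt C' C := by
  unfold RedLt; omega

lemma varsT_sub_varsS {N : MsgV} {S : Finset MsgV} (h : N ∈ S) :
    varsT N ⊆ varsS S := Finset.subset_biUnion_of_mem varsT h

lemma red_decreases {C C' : List Constraint} {θ : ℕ → MsgV} (h : Red C θ C') :
    RedLt C' C := by
  classical
  cases h with
  | @c1 C₁ C₂ S M N θ hM hN hmgu =>
      have hmapeq : C₁.map (csub θ) ++ C₂.map (csub θ) = (C₁ ++ C₂).map (csub θ) :=
        List.map_append.symm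
      have hVsub : varsT M ∪ varsT N ⊆ varsC (C₁ ++ Constraint.rightc S M :: C₂) := by
        rw [varsC_append]
        intro z hz
        apply Finset.mem_union_right
        show z ∈ cvars (Constraint.rightc S M) ∪ varsC C₂
        apply Finset.mem_union_left
        simp only [cvars, Constraint.lhs, Constraint.rhs, Finset.mem_union]
        rcases Finset.mem_union.1 hz with h | h
        · exact Or.inr h
        · exact Or.inl (varsT_sub_varsS hN h)
      have htail : varsC (C₁ ++ C₂) ⊆ varsC (C₁ ++ Constraint.rightc S M :: C₂) := by
        rw [varsC_append, varsC_append]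
        apply Finset.union_subset_union_right
        show varsC C₂ ⊆ cvars _ ∪ varsC C₂
        exact Finset.subset_union_right
      have hsub' : varsC (C₁.map (csub θ) ++ C₂.map (csub θ)) ⊆
          (varsC (C₁ ++ C₂)).biUnion (fun w => varsT (θ w)) := by
        rw [hmapeq]; exact varsC_map_csub θ _
      have hCC : varsC (C₁.map (csub θ) ++ C₂.map (csub θ)) ⊆
          varsC (C₁ ++ Constraint.rightc S M :: C₂) := by
        refine hsub'.trans ?_
        intro z hz
        obtain ⟨w, hw, hz⟩ := Finset.mem_biUnion.1 hz
        by_cases hθw : θ w = var w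
        · rw [hθw] at hz
          simp only [varsT, Finset.mem_singleton] at hz
          subst hz
          exact htail hw
        · exact hVsub ((hmgu.2.2 w hθw).2 hz)
      by_cases hvp : ∀ w, ∃ u, θ w = var u
      · -- θ is variable-valued: sizes are preserved, one constraint removed
        apply redlt_of_le_le_lt (Finset.card_le_card hCC)
        · show mu2L _ ≤ mu2L _
          unfold mu2L
          rw [hmapeq, List.map_map]
          have hle : ((C₁ ++ C₂).map (mu2 ∘ csub θ)).sum ≤ ((C₁ ++ C₂).map mu2).sum :=
            List.sum_le_sum (fun c _ => mu2_csub_le hvp c)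
          simp only [List.map_append, List.map_cons, List.sum_append, List.sum_cons] at hle ⊢
          have h0 : mu2 (Constraint.rightc S M) = 0 := rfl
          omega
        · show mu3L _ < mu3L _
          unfold mu3L
          rw [hmapeq, List.map_map]
          have heq : ((C₁ ++ C₂).map (mu3 ∘ csub θ)).sum = ((C₁ ++ C₂).map mu3).sum := by
            congr 1
            exact List.map_congr_left (fun c _ => mu3_csub_eq hvp c)
          simp only [List.map_append, List.map_cons, List.sum_append, List.sum_cons] at heq ⊢
          have h0 : mu3 (Constraint.rightc S M) = sizeT M := rfl
          have := sizeT_pos M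
          omega
      · -- θ maps some variable to a non-variable: a variable vanishes
        push_neg at hvp
        obtain ⟨x0, hx0⟩ := hvp
        obtain ⟨z, hzV, hz⟩ := vanish hmgu hx0
        left
        have hzC : z ∈ varsC (C₁ ++ Constraint.rightc S M :: C₂) := hVsub hzV
        have hznot : z ∉ varsC (C₁.map (csub θ) ++ C₂.map (csub θ)) := by
          intro hmem
          obtain ⟨w, _, hw⟩ := Finset.mem_biUnion.1 (hsub' hmem)
          exact hz w hw
        have herase : varsC (C₁.map (csub θ) ++ C₂.map (csub θ)) ⊆
            (varsC (C₁ ++ Constraint.rightc S M :: C₂)).erase z := by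
          intro y hy
          exact Finset.mem_erase.2 ⟨fun h => hznot (h ▸ hy), hCC hy⟩
        exact lt_of_le_of_lt (Finset.card_le_card herase)
          (Finset.card_erase_lt_of_mem hzC)
  | @c2p C₁ C₂ S M N =>
      have hv : varsC (C₁ ++ Constraint.rightc S M :: Constraint.rightc S N :: C₂) =
          varsC (C₁ ++ Constraint.rightc S (pair M N) :: C₂) := by
        rw [varsC_append, varsC_append]
        simp only [varsC, cvars, Constraint.lhs, Constraint.rhs, varsT]
        ext z
        simp only [Finset.mem_union]
        tauto
      refine Or.inr ⟨congrArg Finset.card hv, Or.inr ⟨?_, ?_⟩⟩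
      · simp [mu2L, List.map_append, List.sum_append, mu2]
      · simp only [mu3L, List.map_append, List.map_cons, List.sum_append, List.sum_cons]
        have h1 : mu3 (Constraint.rightc S (pair M N)) = sizeT M + sizeT N + 1 := rfl
        have h2 : mu3 (Constraint.rightc S M) = sizeT M := rfl
        have h3 : mu3 (Constraint.rightc S N) = sizeT N := rfl
        omega
  | @c2e C₁ C₂ S M N =>
      have hv : varsC (C₁ ++ Constraint.rightc S M :: Constraint.rightc S N :: C₂) =
          varsC (C₁ ++ Constraint.rightc S (enc M N) :: C₂) := by
        rw [varsC_append, varsC_append]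
        simp only [varsC, cvars, Constraint.lhs, Constraint.rhs, varsT]
        ext z
        simp only [Finset.mem_union]
        tauto
      refine Or.inr ⟨congrArg Finset.card hv, Or.inr ⟨?_, ?_⟩⟩
      · simp [mu2L, List.map_append, List.sum_append, mu2]
      · simp only [mu3L, List.map_append, List.map_cons, List.sum_append, List.sum_cons]
        have h1 : mu3 (Constraint.rightc S (enc M N)) = sizeT M + sizeT N + 1 := rfl
        have h2 : mu3 (Constraint.rightc S M) = sizeT M := rfl
        have h3 : mu3 (Constraint.rightc S N) = sizeT N := rfl
        omega
  | @c3 C₁ C₂ S M =>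
      have hv : varsC (C₁ ++ Constraint.rightc S M :: C₂) =
          varsC (C₁ ++ Constraint.proper S M :: C₂) := by
        rw [varsC_append, varsC_append]
        simp only [varsC, cvars, Constraint.lhs, Constraint.rhs]
      refine Or.inr ⟨congrArg Finset.card hv, Or.inl ?_⟩
      simp only [mu2L, List.map_append, List.map_cons, List.sum_append, List.sum_cons]
      have h1 : mu2 (Constraint.proper S M) = 1 + S.sum sizeT := rfl
      have h2 : mu2 (Constraint.rightc S M) = 0 := rfl
      omega
  | @c4 C₁ C₂ S M N U hpair =>
      have hv : varsC (C₁ ++ Constraint.proper (insert M (insert N S)) U :: C₂) =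
          varsC (C₁ ++ Constraint.proper (insert (pair M N) S) U :: C₂) := by
        rw [varsC_append, varsC_append]
        simp only [varsC, cvars, Constraint.lhs, Constraint.rhs, varsS_insert, varsT]
        ext z
        simp only [Finset.mem_union]
        tauto
      refine Or.inr ⟨congrArg Finset.card hv, Or.inl ?_⟩
      simp only [mu2L, List.map_append, List.map_cons, List.sum_append, List.sum_cons]
      have h1 : mu2 (Constraint.proper (insert (pair M N) S) U) =
          1 + (insert (pair M N) S).sum sizeT := rfl
      have h2 : mu2 (Constraint.proper (insert M (insert N S)) U) =
          1 + (insert M (insert N S)).sum sizeT := rfl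
      have h3 : (insert (pair M N) S).sum sizeT = sizeT (pair M N) + S.sum sizeT :=
        Finset.sum_insert hpair
      have h4 := sum_insert_le M (insert N S)
      have h5 := sum_insert_le N S
      have h6 : sizeT (pair M N) = sizeT M + sizeT N + 1 := rfl
      omega
  | @c5 C₁ C₂ S M N U henc =>
      have hv : varsC (C₁ ++ Constraint.rightc (insert (enc M N) S) N ::
            Constraint.proper (insert M (insert N S)) U :: C₂) =
          varsC (C₁ ++ Constraint.proper (insert (enc M N) S) U :: C₂) := by
        rw [varsC_append, varsC_append]
        simp only [varsC, cvars, Constraint.lhs, Constraint.rhs, varsS_insert, varsT]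
        ext z
        simp only [Finset.mem_union]
        tauto
      refine Or.inr ⟨congrArg Finset.card hv, Or.inl ?_⟩
      simp only [mu2L, List.map_append, List.map_cons, List.sum_append, List.sum_cons]
      have h1 : mu2 (Constraint.proper (insert (enc M N) S) U) =
          1 + (insert (enc M N) S).sum sizeT := rfl
      have h2 : mu2 (Constraint.proper (insert M (insert N S)) U) =
          1 + (insert M (insert N S)).sum sizeT := rfl
      have h0 : mu2 (Constraint.rightc (insert (enc M N) S) N) = 0 := rfl
      have h3 : (insert (enc M N) S).sum sizeT = sizeT (enc M N) + S.sum sizeT :=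
        Finset.sum_insert henc
      have h4 := sum_insert_le M (insert N S)
      have h5 := sum_insert_le N S
      have h6 : sizeT (enc M N) = sizeT M + sizeT N + 1 := rfl
      omega

end Main

/-- Termination of constraint reduction: there is no infinite reduction
sequence. -/
theorem constraint_reduction_terminates :
    ¬ ∃ f : ℕ → List Constraint, ∀ n, ∃ θ, Red (f n) θ (f (n + 1)) := by
  rintro ⟨f, hf⟩
  have hdec : ∀ n, RedLt (f (n + 1)) (f n) := by
    intro n
    obtain ⟨θ, hθ⟩ := hf n
    exact red_decreases hθ
  set g : ℕ → ℕ × ℕ × ℕ := fun n => (mu1L (f n), mu2L (f n), mu3L (f n)) with hg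
  have hwf : WellFounded
      (Prod.Lex (· < ·) (Prod.Lex (· < ·) (· < ·)) : ℕ × ℕ × ℕ → ℕ × ℕ × ℕ → Prop) :=
    WellFounded.prod_lex (Nat.lt_wfRel.wf) (WellFounded.prod_lex Nat.lt_wfRel.wf Nat.lt_wfRel.wf)
  obtain ⟨m, ⟨n, hn⟩, hmin⟩ := hwf.has_min (Set.range g) ⟨g 0, 0, rfl⟩
  apply hmin (g (n + 1)) ⟨n + 1, rfl⟩
  rw [← hn]
  show Prod.Lex _ _ (mu1L (f (n+1)), mu2L (f (n+1)), mu3L (f (n+1)))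
      (mu1L (f n), mu2L (f n), mu3L (f n))
  rcases hdec n with h | ⟨h1, h⟩
  · exact Prod.Lex.left _ _ h
  · rw [h1]
    apply Prod.Lex.right
    rcases h with h | ⟨h2, h3⟩
    · exact Prod.Lex.left _ _ h
    · rw [h2]
      exact Prod.Lex.right _ h3
end

section
/- Soundness of constraint reduction: if a list of deducibility constraints C reduces in one step to C' with associated substitution θ, and σ is a solution of C', then θ∘σ is a solution of C. Consequently, if C reduces (in many steps) to a constraint system in solved form, then C is satisfiable. -/
open MsgV

lemma comp_id (σ : ℕ → MsgV) : comp idSub σ = σ := by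
  funext x; simp [comp, idSub, substT]

lemma groundT_subst {σ : ℕ → MsgV} (hσ : groundSub σ) (m : MsgV) :
    groundT (substT σ m) := by
  induction m with
  | name a => simp [substT, groundT, varsT]
  | var x => exact hσ x
  | pair m n ihm ihn =>
      simp only [substT, groundT, varsT, Finset.union_eq_empty]
      exact ⟨ihm, ihn⟩
  | enc m n ihm ihn =>
      simp only [substT, groundT, varsT, Finset.union_eq_empty]
      exact ⟨ihm, ihn⟩

lemma SC_mono {Γ Γ' : Finset MsgV} {M : MsgV} (h : SC Γ M) (hs : Γ ⊆ Γ') :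
    SC Γ' M := by
  induction h generalizing Γ' with
  | id hM => exact SC.id (hs hM)
  | pR _ _ ihm ihn => exact SC.pR (ihm hs) (ihn hs)
  | eR _ _ ihm ihn => exact SC.eR (ihm hs) (ihn hs)
  | pL hM _ ih =>
      exact SC.pL (hs hM) (ih (Finset.insert_subset_insert _
        (Finset.insert_subset_insert _ hs)))
  | eL hM _ _ ihk ih =>
      exact SC.eL (hs hM) (ihk hs) (ih (Finset.insert_subset_insert _
        (Finset.insert_subset_insert _ hs)))

lemma SCR_SC {Γ : Finset MsgV} {M : MsgV} (h : SCR Γ M) : SC Γ M := by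
  induction h with
  | id hM => exact SC.id hM
  | pR _ _ ihm ihn => exact SC.pR ihm ihn
  | eR _ _ ihm ihn => exact SC.eR ihm ihn

lemma holds_comp (θ σ : ℕ → MsgV) (c : Constraint) :
    holds (comp θ σ) c ↔ holds σ (csub θ c) := by
  have him : ∀ S : Finset MsgV,
      S.image (substT (comp θ σ)) = (S.image (substT θ)).image (substT σ) := by
    intro S
    rw [Finset.image_image]
    exact Finset.image_congr (fun m _ => substT_comp θ σ m)
  cases c with
  | proper S M => simp [holds, csub, him, substT_comp]
  | rightc S M => simp [holds, csub, him, substT_comp]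

lemma sound_one (C : List Constraint) (θ : ℕ → MsgV) (C' : List Constraint)
    (σ : ℕ → MsgV) (hred : Red C θ C') (hsol : Solution σ C') :
    Solution (comp θ σ) C := by
  obtain ⟨hg, hh⟩ := hsol
  cases hred with
  | @c1 C₁ C₂ S M N θ hM hN hmgu =>
      refine ⟨fun x => groundT_subst hg (θ x), ?_⟩
      intro c hc
      rcases List.mem_append.1 hc with hc | hc
      · exact (holds_comp θ σ c).2
          (hh _ (List.mem_append_left _ (List.mem_map_of_mem hc)))
      · rcases List.mem_cons.1 hc with rfl | hc
        · show SCR (S.image (substT (comp θ σ))) (substT (comp θ σ) M)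
          have hMN : substT (comp θ σ) M = substT (comp θ σ) N := by
            rw [substT_comp, substT_comp, hmgu.1]
          rw [hMN]
          exact SCR.id (Finset.mem_image_of_mem _ hN)
        · exact (holds_comp θ σ c).2
            (hh _ (List.mem_append_right _ (List.mem_map_of_mem hc)))
  | @c2p C₁ C₂ S M N =>
      rw [comp_id]
      refine ⟨hg, ?_⟩
      intro c hc
      rcases List.mem_append.1 hc with hc | hc
      · exact hh _ (List.mem_append_left _ hc)
      · rcases List.mem_cons.1 hc with rfl | hc
        · show SCR _ (substT σ (pair M N))
          exact SCR.pR
            (hh _ (List.mem_append_right _ (List.mem_cons_self)))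
            (hh _ (List.mem_append_right _ (List.mem_cons_of_mem _
              (List.mem_cons_self))))
        · exact hh _ (List.mem_append_right _ (List.mem_cons_of_mem _
            (List.mem_cons_of_mem _ hc)))
  | @c2e C₁ C₂ S M N =>
      rw [comp_id]
      refine ⟨hg, ?_⟩
      intro c hc
      rcases List.mem_append.1 hc with hc | hc
      · exact hh _ (List.mem_append_left _ hc)
      · rcases List.mem_cons.1 hc with rfl | hc
        · show SCR _ (substT σ (enc M N))
          exact SCR.eR
            (hh _ (List.mem_append_right _ (List.mem_cons_self)))
            (hh _ (List.mem_append_right _ (List.mem_cons_of_mem _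
              (List.mem_cons_self))))
        · exact hh _ (List.mem_append_right _ (List.mem_cons_of_mem _
            (List.mem_cons_of_mem _ hc)))
  | @c3 C₁ C₂ S M =>
      rw [comp_id]
      refine ⟨hg, ?_⟩
      intro c hc
      rcases List.mem_append.1 hc with hc | hc
      · exact hh _ (List.mem_append_left _ hc)
      · rcases List.mem_cons.1 hc with rfl | hc
        · exact SCR_SC (hh _ (List.mem_append_right _ (List.mem_cons_self)))
        · exact hh _ (List.mem_append_right _ (List.mem_cons_of_mem _ hc))
  | @c4 C₁ C₂ S M N U hMN =>
      rw [comp_id]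
      refine ⟨hg, ?_⟩
      intro c hc
      rcases List.mem_append.1 hc with hc | hc
      · exact hh _ (List.mem_append_left _ hc)
      · rcases List.mem_cons.1 hc with rfl | hc
        · show SC (((insert (pair M N) S)).image (substT σ)) (substT σ U)
          have h1 : SC ((insert M (insert N S)).image (substT σ)) (substT σ U) :=
            hh _ (List.mem_append_right _ (List.mem_cons_self))
          rw [Finset.image_insert]
          refine SC.pL (M := substT σ M) (N := substT σ N)
            (Finset.mem_insert_self _ _) ?_
          rw [Finset.image_insert, Finset.image_insert] at h1
          refine SC_mono h1 ?_
          refine Finset.insert_subset_insert _ (Finset.insert_subset_insert _ ?_)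
          exact Finset.subset_insert _ _
        · exact hh _ (List.mem_append_right _ (List.mem_cons_of_mem _ hc))
  | @c5 C₁ C₂ S M N U hMN =>
      rw [comp_id]
      refine ⟨hg, ?_⟩
      intro c hc
      rcases List.mem_append.1 hc with hc | hc
      · exact hh _ (List.mem_append_left _ hc)
      · rcases List.mem_cons.1 hc with rfl | hc
        · show SC (((insert (enc M N) S)).image (substT σ)) (substT σ U)
          have hk : SCR ((insert (enc M N) S).image (substT σ)) (substT σ N) :=
            hh _ (List.mem_append_right _ (List.mem_cons_self))
          have h1 : SC ((insert M (insert N S)).image (substT σ)) (substT σ U) :=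
            hh _ (List.mem_append_right _ (List.mem_cons_of_mem _
              (List.mem_cons_self)))
          refine SC.eL (M := substT σ M) (K := substT σ N) ?_ (SCR_SC hk) ?_
          · rw [Finset.image_insert]
            exact Finset.mem_insert_self _ _
          · rw [Finset.image_insert, Finset.image_insert] at h1
            rw [Finset.image_insert]
            refine SC_mono h1 ?_
            refine Finset.insert_subset_insert _
              (Finset.insert_subset_insert _ ?_)
            exact Finset.subset_insert _ _
        · exact hh _ (List.mem_append_right _ (List.mem_cons_of_mem _
            (List.mem_cons_of_mem _ hc)))

/-- Soundness of constraint reduction: one-step reduction reflects solutions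
(via composition with the associated substitution); consequently, reducing to
a solved form (whose left sides all contain a common name) yields
satisfiability. -/
theorem constraint_reduction_sound :
    (∀ (C : List Constraint) (θ : ℕ → MsgV) (C' : List Constraint)
        (σ : ℕ → MsgV), Red C θ C' → Solution σ C' → Solution (comp θ σ) C) ∧
    (∀ (C : List Constraint) (σ : ℕ → MsgV) (C' : List Constraint) (a : ℕ),
        RedStar C σ C' → Solved C' → (∀ c ∈ C', name a ∈ c.lhs) →
        ∃ τ, Solution τ C) := by
  refine ⟨sound_one, ?_⟩
  intro C σ C' a hstar
  induction hstar with
  | refl C =>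
      intro hsolved hname
      refine ⟨fun _ => name a, fun x => by simp [groundT, varsT], ?_⟩
      intro c hc
      obtain ⟨S, x, rfl⟩ := hsolved c hc
      show SCR (S.image (substT fun _ => name a)) (substT (fun _ => name a) (var x))
      have : substT (fun _ => name a) (name a) ∈ S.image (substT fun _ => name a) :=
        Finset.mem_image_of_mem _ (hname _ hc)
      simpa [substT] using SCR.id this
  | step hred _ ih =>
      intro hsolved hname
      obtain ⟨τ, hτ⟩ := ih hsolved hname
      exact ⟨comp _ τ, sound_one _ _ _ _ hred hτ⟩
end
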